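/- Let α, β ∈ ℝ with α ≠ 1 and 2αβ ≠ 1, and define F(x¹,x²) = [Δ₁^α + Δ₂^α + Δ₃^α]^β where Δ₁, Δ₂, Δ₃ are the 2×2 minors of the 3×2 matrix x. Then at any point x where all quantities are positive and well-defined, setting y = F'(x) with minors D¹, D², D³, one has ⟨x,y⟩ − F(x) = (2αβ−1)(αβ)^(−2αβ/(2αβ−1)) [(D¹)^(α/(α−1)) + (D²)^(α/(α−1)) + (D³)^(α/(α−1))]^(β(α−1)/(2αβ−1)). -/

import Mathlib

attribute [local instance] Matrix.normedAddCommGroup Matrix.normedSpace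

/-- The three `2×2` minors (at indices `0, 1, 2`) of a `3×2` matrix. -/
def minors32 (x : Matrix (Fin 3) (Fin 2) ℝ) : Fin 3 → ℝ :=
  ![x 1 0 * x 2 1 - x 1 1 * x 2 0,
    x 0 0 * x 2 1 - x 0 1 * x 2 0,
    x 0 0 * x 1 1 - x 0 1 * x 1 0]

noncomputable def entryCLM (i : Fin 3) (j : Fin 2) : Matrix (Fin 3) (Fin 2) ℝ →L[ℝ] ℝ :=
  LinearMap.mkContinuous (Matrix.entryLinearMap ℝ ℝ i j) 1 (fun z => by
    simpa using z.norm_entry_le_entrywise_sup_norm (i := i) (j := j))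

@[simp] lemma entryCLM_apply (i : Fin 3) (j : Fin 2) (z : Matrix (Fin 3) (Fin 2) ℝ) :
    entryCLM i j z = z i j := rfl

set_option maxHeartbeats 1000000 in
/-- Legendre transform of `F(x¹,x²) = (Δ₁^α + Δ₂^α + Δ₃^α)^β`: at a point with
positive minors, with `y = F'(x)` and minors `D¹, D², D³` of `y`,
`⟨x,y⟩ - F(x) = (2αβ-1)(αβ)^{-2αβ/(2αβ-1)} (Σ (Dⁿ)^{α/(α-1)})^{β(α-1)/(2αβ-1)}`. -/
theorem legendre_power_minors (α β : ℝ) (hα : α ≠ 1) (hαβ : 0 < α * β)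
    (h2 : 2 * α * β ≠ 1)
    (x : Matrix (Fin 3) (Fin 2) ℝ) (hx : ∀ m, 0 < minors32 x m)
    (y : Matrix (Fin 2) (Fin 3) ℝ)
    (hy : ∀ k n, y k n =
      fderiv ℝ (fun z : Matrix (Fin 3) (Fin 2) ℝ =>
          ((minors32 z 0) ^ α + (minors32 z 1) ^ α + (minors32 z 2) ^ α) ^ β) x
        (Matrix.single n k 1))
    (D : Fin 3 → ℝ)
    (hD1 : D 0 = y 0 1 * y 1 2 - y 1 1 * y 0 2)
    (hD2 : D 1 = y 0 0 * y 1 2 - y 1 0 * y 0 2)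
    (hD3 : D 2 = y 0 0 * y 1 1 - y 1 0 * y 0 1) :
    (∑ n, ∑ k, x n k * y k n)
        - ((minors32 x 0) ^ α + (minors32 x 1) ^ α + (minors32 x 2) ^ α) ^ β
      = (2 * α * β - 1) * (α * β) ^ (-(2 * α * β) / (2 * α * β - 1)) *
          ((D 0) ^ (α / (α - 1)) + (D 1) ^ (α / (α - 1)) + (D 2) ^ (α / (α - 1)))
            ^ (β * (α - 1) / (2 * α * β - 1)) := by
  have hm0 : ∀ z : Matrix (Fin 3) (Fin 2) ℝ,
      minors32 z 0 = z 1 0 * z 2 1 - z 1 1 * z 2 0 := fun z => rfl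
  have hm1 : ∀ z : Matrix (Fin 3) (Fin 2) ℝ,
      minors32 z 1 = z 0 0 * z 2 1 - z 0 1 * z 2 0 := fun z => rfl
  have hm2 : ∀ z : Matrix (Fin 3) (Fin 2) ℝ,
      minors32 z 2 = z 0 0 * z 1 1 - z 0 1 * z 1 0 := fun z => rfl
  set A0 : ℝ := x 1 0 * x 2 1 - x 1 1 * x 2 0 with hA0def
  set A1 : ℝ := x 0 0 * x 2 1 - x 0 1 * x 2 0 with hA1def
  set A2 : ℝ := x 0 0 * x 1 1 - x 0 1 * x 1 0 with hA2def
  have hA0 : 0 < A0 := by have := hx 0; rwa [hm0] at this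
  have hA1 : 0 < A1 := by have := hx 1; rwa [hm1] at this
  have hA2 : 0 < A2 := by have := hx 2; rwa [hm2] at this
  set S : ℝ := A0 ^ α + A1 ^ α + A2 ^ α with hSdef
  have hS : 0 < S := by positivity
  -- derivatives of minors
  have he : ∀ (i : Fin 3) (j : Fin 2),
      HasFDerivAt (fun z : Matrix (Fin 3) (Fin 2) ℝ => z i j) (entryCLM i j) x :=
    fun i j => (entryCLM i j).hasFDerivAt
  have h0 : HasFDerivAt (fun z : Matrix (Fin 3) (Fin 2) ℝ => z 1 0 * z 2 1 - z 1 1 * z 2 0)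
      ((x 1 0 • entryCLM 2 1 + x 2 1 • entryCLM 1 0) -
        (x 1 1 • entryCLM 2 0 + x 2 0 • entryCLM 1 1)) x :=
    ((he 1 0).mul (he 2 1)).sub ((he 1 1).mul (he 2 0))
  have h1 : HasFDerivAt (fun z : Matrix (Fin 3) (Fin 2) ℝ => z 0 0 * z 2 1 - z 0 1 * z 2 0)
      ((x 0 0 • entryCLM 2 1 + x 2 1 • entryCLM 0 0) -
        (x 0 1 • entryCLM 2 0 + x 2 0 • entryCLM 0 1)) x :=
    ((he 0 0).mul (he 2 1)).sub ((he 0 1).mul (he 2 0))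
  have h2' : HasFDerivAt (fun z : Matrix (Fin 3) (Fin 2) ℝ => z 0 0 * z 1 1 - z 0 1 * z 1 0)
      ((x 0 0 • entryCLM 1 1 + x 1 1 • entryCLM 0 0) -
        (x 0 1 • entryCLM 1 0 + x 1 0 • entryCLM 0 1)) x :=
    ((he 0 0).mul (he 1 1)).sub ((he 0 1).mul (he 1 0))
  have hp0 := (h0.rpow_const (p := α) (Or.inl hA0.ne'))
  have hp1 := (h1.rpow_const (p := α) (Or.inl hA1.ne'))
  have hp2 := (h2'.rpow_const (p := α) (Or.inl hA2.ne'))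
  have hsum := (hp0.add hp1).add hp2
  have hF := hsum.rpow_const (p := β) (Or.inl hS.ne')
  have hfun : (fun z : Matrix (Fin 3) (Fin 2) ℝ =>
      ((minors32 z 0) ^ α + (minors32 z 1) ^ α + (minors32 z 2) ^ α) ^ β) =
      (fun z : Matrix (Fin 3) (Fin 2) ℝ =>
        ((z 1 0 * z 2 1 - z 1 1 * z 2 0) ^ α + (z 0 0 * z 2 1 - z 0 1 * z 2 0) ^ α +
          (z 0 0 * z 1 1 - z 0 1 * z 1 0) ^ α) ^ β) := by
    funext z; rw [hm0, hm1, hm2]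
  rw [hm0 x, hm1 x, hm2 x]
  simp only [hfun] at hy
  have hF' : HasFDerivAt (fun z : Matrix (Fin 3) (Fin 2) ℝ =>
      ((z 1 0 * z 2 1 - z 1 1 * z 2 0) ^ α + (z 0 0 * z 2 1 - z 0 1 * z 2 0) ^ α +
        (z 0 0 * z 1 1 - z 0 1 * z 1 0) ^ α) ^ β)
      ((β * S ^ (β - 1)) •
        ((α * A0 ^ (α - 1)) • ((x 1 0 • entryCLM 2 1 + x 2 1 • entryCLM 1 0) -
            (x 1 1 • entryCLM 2 0 + x 2 0 • entryCLM 1 1)) +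
          (α * A1 ^ (α - 1)) • ((x 0 0 • entryCLM 2 1 + x 2 1 • entryCLM 0 0) -
            (x 0 1 • entryCLM 2 0 + x 2 0 • entryCLM 0 1)) +
          (α * A2 ^ (α - 1)) • ((x 0 0 • entryCLM 1 1 + x 1 1 • entryCLM 0 0) -
            (x 0 1 • entryCLM 1 0 + x 1 0 • entryCLM 0 1)))) x := hF
  rw [hF'.fderiv] at hy
  set b : ℝ := β * S ^ (β - 1) with hbdef
  set u0 : ℝ := A0 ^ (α - 1) with hu0def
  set u1 : ℝ := A1 ^ (α - 1) with hu1def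
  set u2 : ℝ := A2 ^ (α - 1) with hu2def
  have hy00 : y 0 0 = b * (α * u1 * x 2 1 + α * u2 * x 1 1) := by
    rw [hy 0 0]
    simp [Matrix.single, smul_eq_mul]
    ring
  have hy10 : y 1 0 = b * (-(α * u1 * x 2 0) - α * u2 * x 1 0) := by
    rw [hy 1 0]
    simp [Matrix.single, smul_eq_mul]
    ring
  have hy01 : y 0 1 = b * (α * u0 * x 2 1 - α * u2 * x 0 1) := by
    rw [hy 0 1]
    simp [Matrix.single, smul_eq_mul]
    ring
  have hy11 : y 1 1 = b * (-(α * u0 * x 2 0) + α * u2 * x 0 0) := by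
    rw [hy 1 1]
    simp [Matrix.single, smul_eq_mul]
    ring
  have hy02 : y 0 2 = b * (-(α * u0 * x 1 1) - α * u1 * x 0 1) := by
    rw [hy 0 2]
    simp [Matrix.single, smul_eq_mul]
    ring
  have hy12 : y 1 2 = b * (α * u0 * x 1 0 + α * u1 * x 0 0) := by
    rw [hy 1 2]
    simp [Matrix.single, smul_eq_mul]
    ring
  -- basic rpow facts
  have hU0 : u0 * A0 = A0 ^ α := by
    rw [hu0def, ← Real.rpow_add_one hA0.ne']; ring_nf
  have hU1 : u1 * A1 = A1 ^ α := by
    rw [hu1def, ← Real.rpow_add_one hA1.ne']; ring_nf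
  have hU2 : u2 * A2 = A2 ^ α := by
    rw [hu2def, ← Real.rpow_add_one hA2.ne']; ring_nf
  have hbS : b * S = β * S ^ β := by
    rw [hbdef, mul_assoc, ← Real.rpow_add_one hS.ne']; ring_nf
  -- the inner product
  have hsum2 : (∑ n : Fin 3, ∑ k : Fin 2, x n k * y k n) = 2 * α * b * S := by
    simp only [Fin.sum_univ_three, Fin.sum_univ_two]
    rw [hy00, hy10, hy01, hy11, hy02, hy12, hSdef, ← hU0, ← hU1, ← hU2]
    ring
  have hLHS : (∑ n : Fin 3, ∑ k : Fin 2, x n k * y k n) - S ^ β = (2 * α * β - 1) * S ^ β := by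
    rw [hsum2]
    have : 2 * α * b * S = 2 * α * (β * S ^ β) := by rw [mul_assoc, hbS]
    rw [this]; ring
  -- the minors of y
  set K : ℝ := (α * β) ^ 2 * S ^ (2 * β - 1) with hKdef
  have hbK : (b * α) ^ 2 * S = K := by
    have hss : S ^ (β - 1) * S ^ (β - 1) * S = S ^ (2 * β - 1) := by
      rw [← Real.rpow_add hS, ← Real.rpow_add_one hS.ne']; ring_nf
    rw [hbdef, hKdef, ← hss]; ring
  have hD0' : D 0 = K * u0 := by
    rw [hD1, hy01, hy12, hy11, hy02]
    have expand : b * (α * u0 * x 2 1 - α * u2 * x 0 1) * (b * (α * u0 * x 1 0 + α * u1 * x 0 0))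
        - b * (-(α * u0 * x 2 0) + α * u2 * x 0 0) * (b * (-(α * u0 * x 1 1) - α * u1 * x 0 1))
        = (b * α) ^ 2 * u0 * (u0 * A0 + u1 * A1 + u2 * A2) := by
      rw [hA0def, hA1def, hA2def]; ring
    rw [expand, hU0, hU1, hU2, ← hSdef]
    have h' : (b * α) ^ 2 * u0 * S = ((b * α) ^ 2 * S) * u0 := by ring
    rw [h', hbK]
  have hD1' : D 1 = K * u1 := by
    rw [hD2, hy00, hy12, hy10, hy02]
    have expand : b * (α * u1 * x 2 1 + α * u2 * x 1 1) * (b * (α * u0 * x 1 0 + α * u1 * x 0 0))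
        - b * (-(α * u1 * x 2 0) - α * u2 * x 1 0) * (b * (-(α * u0 * x 1 1) - α * u1 * x 0 1))
        = (b * α) ^ 2 * u1 * (u0 * A0 + u1 * A1 + u2 * A2) := by
      rw [hA0def, hA1def, hA2def]; ring
    rw [expand, hU0, hU1, hU2, ← hSdef]
    have h' : (b * α) ^ 2 * u1 * S = ((b * α) ^ 2 * S) * u1 := by ring
    rw [h', hbK]
  have hD2' : D 2 = K * u2 := by
    rw [hD3, hy00, hy11, hy10, hy01]
    have expand : b * (α * u1 * x 2 1 + α * u2 * x 1 1) * (b * (-(α * u0 * x 2 0) + α * u2 * x 0 0))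
        - b * (-(α * u1 * x 2 0) - α * u2 * x 1 0) * (b * (α * u0 * x 2 1 - α * u2 * x 0 1))
        = (b * α) ^ 2 * u2 * (u0 * A0 + u1 * A1 + u2 * A2) := by
      rw [hA0def, hA1def, hA2def]; ring
    rw [expand, hU0, hU1, hU2, ← hSdef]
    have h' : (b * α) ^ 2 * u2 * S = ((b * α) ^ 2 * S) * u2 := by ring
    rw [h', hbK]
  -- final algebra
  have hα1 : α - 1 ≠ 0 := sub_ne_zero.mpr hα
  have h21 : 2 * α * β - 1 ≠ 0 := sub_ne_zero.mpr h2
  have hK : 0 < K := mul_pos (pow_pos hαβ 2) (Real.rpow_pos_of_pos hS _)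
  set p : ℝ := α / (α - 1) with hpdef
  set q : ℝ := β * (α - 1) / (2 * α * β - 1) with hqdef
  have e0 : (K * u0) ^ p = K ^ p * A0 ^ α := by
    rw [Real.mul_rpow hK.le (Real.rpow_nonneg hA0.le _), ← Real.rpow_mul hA0.le]
    have hexp : (α - 1) * p = α := by rw [hpdef]; field_simp
    rw [hexp]
  have e1 : (K * u1) ^ p = K ^ p * A1 ^ α := by
    rw [Real.mul_rpow hK.le (Real.rpow_nonneg hA1.le _), ← Real.rpow_mul hA1.le]
    have hexp : (α - 1) * p = α := by rw [hpdef]; field_simp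
    rw [hexp]
  have e2 : (K * u2) ^ p = K ^ p * A2 ^ α := by
    rw [Real.mul_rpow hK.le (Real.rpow_nonneg hA2.le _), ← Real.rpow_mul hA2.le]
    have hexp : (α - 1) * p = α := by rw [hpdef]; field_simp
    rw [hexp]
  have hT : (D 0) ^ p + (D 1) ^ p + (D 2) ^ p = K ^ p * S := by
    rw [hD0', hD1', hD2', e0, e1, e2, hSdef]; ring
  rw [hLHS, hT]
  have hmain : (α * β) ^ (-(2 * α * β) / (2 * α * β - 1)) * (K ^ p * S) ^ q = S ^ β := by
    rw [Real.mul_rpow (Real.rpow_nonneg hK.le _) hS.le, ← Real.rpow_mul hK.le, hKdef,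
      Real.mul_rpow (by positivity) (Real.rpow_nonneg hS.le _),
      ← Real.rpow_natCast (α * β) 2, ← Real.rpow_mul hαβ.le, ← Real.rpow_mul hS.le]
    have E1 : -(2 * α * β) / (2 * α * β - 1) + ((2 : ℕ) : ℝ) * (p * q) = 0 := by
      rw [hpdef, hqdef]; push_cast; field_simp; ring
    have E2 : (2 * β - 1) * (p * q) + q = β := by
      rw [hpdef, hqdef]; field_simp; rw [div_eq_iff (by rwa [mul_right_comm] at h21)]; ring
    calc (α * β) ^ (-(2 * α * β) / (2 * α * β - 1)) *
          ((α * β) ^ (((2 : ℕ) : ℝ) * (p * q)) * S ^ ((2 * β - 1) * (p * q)) * S ^ q)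
        = ((α * β) ^ (-(2 * α * β) / (2 * α * β - 1)) * (α * β) ^ (((2 : ℕ) : ℝ) * (p * q))) *
            (S ^ ((2 * β - 1) * (p * q)) * S ^ q) := by ring
      _ = (α * β) ^ ((-(2 * α * β) / (2 * α * β - 1)) + ((2 : ℕ) : ℝ) * (p * q)) *
            S ^ ((2 * β - 1) * (p * q) + q) := by
          rw [Real.rpow_add hαβ, Real.rpow_add hS]
      _ = S ^ β := by rw [E1, E2, Real.rpow_zero, one_mul]
  rw [← hmain]
  exact (mul_assoc _ _ _).symm
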